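/- Let R be a commutative ring, A a commutative group, and B a finite subgroup of A such that the image of the cardinality |B| in R is invertible. Set e := |B|⁻¹ · ∑_{b ∈ B} [b] in the group algebra R[A]. Then e is an idempotent element of R[A], the R-algebra homomorphism π : R[A] → R[A/B] induced by the quotient homomorphism A → A/B sends e to 1, and the kernel of π equals the principal ideal of R[A] generated by 1 − e. -/

import Mathlib

open MonoidAlgebra

/-- The transfer idempotent for a finite subgroup `B` of a commutative group `A` over a
commutative ring `R` in which `|B|` is invertible: `e = |B|⁻¹ ∑_{b ∈ B} [b]` is idempotent,
the induced map `π : R[A] → R[A/B]` sends `e` to `1`, and `ker π = (1 - e)`. -/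
theorem transfer_idempotent_group_algebra
    {R : Type*} [CommRing R] {A : Type*} [CommGroup A]
    (B : Subgroup A) [Fintype B]
    (hu : IsUnit ((Fintype.card B : R)))
    (e : MonoidAlgebra R A)
    (he : e = (↑hu.unit⁻¹ : R) • ∑ b : B, MonoidAlgebra.of R A (b : A))
    (π : MonoidAlgebra R A →ₐ[R] MonoidAlgebra R (A ⧸ B))
    (hπ : π = MonoidAlgebra.mapDomainAlgHom R R (QuotientGroup.mk' B)) :
    IsIdempotentElem e ∧ π e = 1 ∧ RingHom.ker π = Ideal.span {1 - e} := by
  have hinv : (↑hu.unit⁻¹ : R) * (Fintype.card B : R) = 1 := by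
    have := hu.unit.inv_mul
    simpa [IsUnit.unit_spec] using congrArg Units.val this
  -- translation invariance of the sum
  have hsum : ∀ b : B, MonoidAlgebra.of R A (b : A) * (∑ c : B, MonoidAlgebra.of R A (c : A))
      = ∑ c : B, MonoidAlgebra.of R A (c : A) := by
    intro b
    rw [Finset.mul_sum]
    calc ∑ c : B, MonoidAlgebra.of R A (b : A) * MonoidAlgebra.of R A (c : A)
        = ∑ c : B, MonoidAlgebra.of R A (((b * c : B) : A)) := by
          simp [← map_mul]
      _ = ∑ c : B, MonoidAlgebra.of R A (c : A) :=
          Equiv.sum_comp (Equiv.mulLeft b) (fun c : B => MonoidAlgebra.of R A (c : A))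
  have hmul : ∀ b : B, MonoidAlgebra.of R A (b : A) * e = e := by
    intro b
    rw [he, mul_smul_comm, hsum]
  -- idempotency
  have hidem : IsIdempotentElem e := by
    unfold IsIdempotentElem
    nth_rewrite 1 [he]
    rw [smul_mul_assoc, Finset.sum_mul]
    have : ∑ b : B, MonoidAlgebra.of R A (b : A) * e = (Fintype.card B : R) • e := by
      rw [Finset.sum_congr rfl fun b _ => hmul b]
      simp [Finset.sum_const, ← Nat.cast_smul_eq_nsmul R]
    rw [this, smul_smul, hinv, one_smul]
  -- π e = 1
  have hπof : ∀ a : A, π (MonoidAlgebra.of R A a)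
      = MonoidAlgebra.of R (A ⧸ B) (QuotientGroup.mk a) := by
    intro a; rw [hπ]; simp [MonoidAlgebra.mapDomainAlgHom]
  have hπe : π e = 1 := by
    rw [he, map_smul, map_sum]
    have : ∀ b : B, π (MonoidAlgebra.of R A (b : A)) = 1 := by
      intro b
      rw [hπof]
      have : (QuotientGroup.mk (b : A) : A ⧸ B) = 1 := by
        simpa using (QuotientGroup.eq_one_iff (b : A)).mpr b.2
      rw [this, map_one]
    rw [Finset.sum_congr rfl fun b _ => this b]
    simp [Finset.sum_const, ← Nat.cast_smul_eq_nsmul R, smul_smul, hinv]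
  -- key lemma
  have hkey : ∀ a a' : A, (QuotientGroup.mk a : A ⧸ B) = QuotientGroup.mk a' →
      MonoidAlgebra.of R A a * e = MonoidAlgebra.of R A a' * e := by
    intro a a' h
    have hb : a⁻¹ * a' ∈ B := (QuotientGroup.eq).mp h
    have : MonoidAlgebra.of R A a' =
        MonoidAlgebra.of R A a * MonoidAlgebra.of R A (((⟨a⁻¹ * a', hb⟩ : B) : A)) := by
      rw [← map_mul]; simp
    rw [this, mul_assoc, hmul]
  -- the section map
  set T : MonoidAlgebra R (A ⧸ B) →ₗ[R] MonoidAlgebra R A :=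
    Finsupp.lift (MonoidAlgebra R A) R (A ⧸ B)
      (fun q => MonoidAlgebra.of R A q.out * e) ∘ₗ
        (MonoidAlgebra.coeffLinearEquiv R).toLinearMap with hTdef
  have hT : ∀ x : MonoidAlgebra R A, x * e = T (π x) := by
    intro x
    induction x using MonoidAlgebra.induction_linear with
    | zero => simp
    | add f g hf hg => rw [add_mul, hf, hg, map_add, map_add]
    | single a r =>
      have h1 : (MonoidAlgebra.single a r : MonoidAlgebra R A) = r • MonoidAlgebra.of R A a := by
        simp [MonoidAlgebra.of_apply, MonoidAlgebra.smul_single']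
      have h2 : π (MonoidAlgebra.single a r) = MonoidAlgebra.single (QuotientGroup.mk a : A ⧸ B) r := by
        rw [hπ]; simp [MonoidAlgebra.mapDomainAlgHom, Finsupp.mapDomain_single]
      rw [h2, hTdef]
      rw [LinearMap.comp_apply]
      erw [Finsupp.lift_apply]
      rw [LinearEquiv.coe_coe, MonoidAlgebra.coeffLinearEquiv_apply, MonoidAlgebra.coeff_single]
      rw [Finsupp.sum_single_index (by simp), h1, smul_mul_assoc,
        hkey a (QuotientGroup.mk a : A ⧸ B).out ((QuotientGroup.out_eq' _).symm)]
  refine ⟨hidem, hπe, ?_⟩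
  ext x
  constructor
  · intro hx
    have hx0 : π x = 0 := (RingHom.mem_ker).mp hx
    have hxe : x * e = 0 := by rw [hT, hx0, map_zero]
    rw [Ideal.mem_span_singleton]
    exact ⟨x, by rw [sub_mul, one_mul, mul_comm e x, hxe, sub_zero]⟩
  · intro hx
    have hle : Ideal.span {1 - e} ≤ RingHom.ker (π : MonoidAlgebra R A →+* MonoidAlgebra R (A ⧸ B)) := by
      rw [Ideal.span_le]
      intro y hy
      rw [Set.mem_singleton_iff] at hy
      subst hy
      simp [RingHom.mem_ker, map_sub, hπe]
    exact hle hx
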